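/- Let $F$ be an algebraically closed field of characteristic $p > 0$, $m$ coprime to $p$ with $m > 1$, $r > 0$, $\tilde G = Z_{p^r m}$, and $\lambda \in F$ a primitive $m$-th root of unity. Consider the faithful $\tilde G$-module $V = W_{p^r, 1} \oplus W_{1,\lambda}$, where $W_{p^r,1}$ is the $p^r$-dimensional indecomposable module on which the order-$m$ subgroup acts trivially, and $W_{1,\lambda}$ is the one-dimensional module on which the order-$p^r$ subgroup acts trivially and a generator of the order-$m$ subgroup acts by $\lambda$. Then $\gamma(\tilde G, V) = \max\{p^r, m\} < p^r m = |\tilde G|$. -/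

import Mathlib

open MvPolynomial

/-- Action of the generator `σ` of the `p^r`-part of `Z_{p^r m}` on
`F[W_{p^r,1} ⊕ W_{1,λ}]`: a unipotent Jordan block on the first `p^r` variables
(indices `0, …, p^r - 1`), trivial on the last variable (index `p^r`). -/
noncomputable def sigAct18 {F : Type*} [Field F] (q : ℕ) :
    MvPolynomial (Fin (q + 1)) F →ₐ[F] MvPolynomial (Fin (q + 1)) F :=
  aeval fun i => X i + if _ : 0 < (i : ℕ) ∧ (i : ℕ) < q then
    X ⟨(i : ℕ) - 1, lt_of_le_of_lt (Nat.sub_le _ _) i.isLt⟩ else 0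

/-- Action of the generator `α` of the `m`-part: trivial on `W_{p^r,1}`,
multiplication by `λ` on `W_{1,λ}` (the last variable). -/
noncomputable def alpAct18 {F : Type*} [Field F] (q : ℕ) (lam : F) :
    MvPolynomial (Fin (q + 1)) F →ₐ[F] MvPolynomial (Fin (q + 1)) F :=
  aeval fun i => if (i : ℕ) < q then X i else C lam * X i

namespace Aux18

open Fin.NatCast

variable {F : Type*} [Field F]

variable (F) in
/-- downward shift (truncated at `q`). -/
noncomputable def Sop (q : ℕ) : Module.End F (ℕ → F) where
  toFun c := fun i => if i + 1 < q then c (i + 1) else 0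
  map_add' a b := by funext i; by_cases h : i + 1 < q <;> simp [h]
  map_smul' r a := by funext i; by_cases h : i + 1 < q <;> simp [h]

variable (F) in
noncomputable def Top (q : ℕ) : Module.End F (ℕ → F) := 1 + Sop F q

variable {q : ℕ}

lemma Top_apply (c : ℕ → F) (i : ℕ) :
    Top F q c i = c i + (if i + 1 < q then c (i + 1) else 0) := rfl

lemma Sop_pow_eq_zero {k : ℕ} (hk : 1 ≤ k) (c : ℕ → F) (i : ℕ) (h : q ≤ i + k) :
    ((Sop F q) ^ k) c i = 0 := by
  induction k, hk using Nat.le_induction generalizing c i with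
  | base =>
    simp only [pow_one, Sop, LinearMap.coe_mk, AddHom.coe_mk]
    rw [if_neg (by omega)]
  | succ k hk ih =>
    rw [pow_succ', Module.End.mul_apply]
    show (if i + 1 < q then (((Sop F q) ^ k) c) (i + 1) else 0) = 0
    split_ifs with h1
    · exact ih c (i + 1) (by omega)
    · rfl

lemma Top_pow_q {p r : ℕ} [Fact p.Prime] [CharP F p] (hr : 0 < r) (hq : q = p ^ r) :
    (Top F q) ^ q = 1 := by
  have hq0 : 0 < q := hq ▸ pow_pos (Fact.out : p.Prime).pos r
  haveI : CharP (Module.End F (ℕ → F)) p := by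
    refine charP_of_injective_algebraMap
      (R := F) (A := Module.End F (ℕ → F)) (fun a b hab => ?_) p
    have := congrFun (congrArg (fun φ : Module.End F (ℕ → F) => φ (fun _ => (1 : F))) hab) 0
    simpa [Module.algebraMap_end_apply] using this
  have hS : (Sop F q) ^ q = 0 := by
    apply LinearMap.ext; intro c; funext i
    rw [Sop_pow_eq_zero (by omega) c i (by omega)]
    rfl
  rw [Top, hq, add_pow_char_pow_of_commute _ _ (Commute.one_left _), one_pow, ← hq, hS, add_zero]

/-- linear form with coefficient vector `c`. -/
noncomputable def lin (q : ℕ) (c : ℕ → F) : MvPolynomial (Fin (q + 1)) F :=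
  ∑ n ∈ Finset.range (q + 1), C (c n) * X (n : Fin (q + 1))

lemma val_natCast {n : ℕ} (h : n < q + 1) : ((n : Fin (q + 1)) : ℕ) = n := by
  simp [Fin.val_natCast, Nat.mod_eq_of_lt h]

lemma lin_isHomog (c : ℕ → F) : (lin q c).IsHomogeneous 1 :=
  IsHomogeneous.sum _ _ _ fun n _ => isHomogeneous_C_mul_X _ _

lemma sigAct_X (i : Fin (q + 1)) :
    sigAct18 (F := F) q (X i) = X i + (if 0 < (i : ℕ) ∧ (i : ℕ) < q
      then X ((((i : ℕ) - 1 : ℕ)) : Fin (q + 1)) else 0) := by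
  rw [sigAct18, aeval_X]
  congr 1
  split_ifs with h
  · congr 1
    ext
    rw [val_natCast (by omega)]
  · rfl

lemma alpAct_X (lam : F) (i : Fin (q + 1)) :
    alpAct18 (F := F) q lam (X i) = if (i : ℕ) < q then X i else C lam * X i := by
  rw [alpAct18, aeval_X]

lemma sig_lin (c : ℕ → F) : sigAct18 q (lin q c) = lin q (Top F q c) := by
  rw [lin, map_sum]
  have h1 : ∀ n ∈ Finset.range (q + 1), sigAct18 (F := F) q (C (c n) * X (n : Fin (q + 1)))
      = C (c n) * X (n : Fin (q + 1))
        + (if 0 < n ∧ n < q then C (c n) * X (((n - 1 : ℕ)) : Fin (q + 1)) else 0) := by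
    intro n hn
    rw [map_mul, sigAct_X, show sigAct18 (F := F) q (C (c n)) = C (c n) from aeval_C _ _,
      val_natCast (Finset.mem_range.mp hn), mul_add]
    congr 1
    split_ifs with h
    · rfl
    · exact mul_zero _
  rw [Finset.sum_congr rfl h1, Finset.sum_add_distrib]
  have h2 : (∑ n ∈ Finset.range (q + 1),
      (if 0 < n ∧ n < q then C (c n) * X (((n - 1 : ℕ)) : Fin (q + 1)) else 0))
      = ∑ n ∈ Finset.range q,
        (if n + 1 < q then C (c (n + 1)) * X ((n : ℕ) : Fin (q + 1)) else 0) := by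
    rw [Finset.sum_range_succ']
    have hterm : ∀ n ∈ Finset.range q,
        (if 0 < n + 1 ∧ n + 1 < q then C (c (n + 1)) * X (((n + 1 - 1 : ℕ)) : Fin (q + 1)) else 0)
        = (if n + 1 < q then C (c (n + 1)) * X ((n : ℕ) : Fin (q + 1)) else 0) := by
      intro n _
      rw [Nat.add_sub_cancel]
      exact if_congr (by omega) rfl rfl
    rw [Finset.sum_congr rfl hterm, if_neg (by omega), add_zero]
  rw [h2, lin]
  have h3 : ∀ n ∈ Finset.range (q + 1), C (Top F q c n) * X ((n : ℕ) : Fin (q + 1))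
      = C (c n) * X ((n : ℕ) : Fin (q + 1))
        + (if n + 1 < q then C (c (n + 1)) * X ((n : ℕ) : Fin (q + 1)) else 0) := by
    intro n _
    rw [Top_apply, C_add, add_mul]
    congr 1
    split_ifs with h
    · rfl
    · rw [C_0, zero_mul]
  rw [Finset.sum_congr rfl h3, Finset.sum_add_distrib]
  congr 1
  rw [Finset.sum_range_succ, if_neg (by omega), add_zero]

lemma alp_lin (lam : F) {c : ℕ → F} (hcq : c q = 0) :
    alpAct18 q lam (lin q c) = lin q c := by
  rw [lin, map_sum]
  refine Finset.sum_congr rfl fun n hn => ?_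
  rw [map_mul, show alpAct18 (F := F) q lam (C (c n)) = C (c n) from aeval_C _ _, alpAct_X,
    val_natCast (Finset.mem_range.mp hn)]
  rcases lt_or_ge n q with h | h
  · rw [if_pos h]
  · have hnq : n = q := by have := Finset.mem_range.mp hn; omega
    rw [hnq, hcq, C_0, zero_mul, zero_mul]

lemma eval_lin {j : ℕ} (hj : j < q + 1) {c : ℕ → F} (hc1 : c j = 1)
    (hc0 : ∀ i, j < i → c i = 0) {v : Fin (q + 1) → F}
    (hv : ∀ i : Fin (q + 1), (i : ℕ) < j → v i = 0) :
    eval v (lin q c) = v (j : Fin (q + 1)) := by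
  rw [lin, map_sum, Finset.sum_eq_single j]
  · simp [hc1]
  · intro n hn hne
    rcases lt_or_gt_of_ne hne with h | h
    · have : v ((n : ℕ) : Fin (q + 1)) = 0 := by
        apply hv
        rw [val_natCast (Finset.mem_range.mp hn)]
        exact h
      simp [this]
    · simp [hc0 n h]
  · intro h
    exact absurd (Finset.mem_range.mpr hj) h

/-- property of coefficient vectors giving norm factors. -/
def Good (j : ℕ) (c : ℕ → F) : Prop := c j = 1 ∧ ∀ i, j < i → c i = 0

lemma good_T {j : ℕ} {c : ℕ → F} (h : Good j c) : Good j (Top F q c) := by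
  obtain ⟨h1, h0⟩ := h
  constructor
  · rw [Top_apply, h1, h0 (j + 1) (by omega)]
    split_ifs <;> simp
  · intro i hi
    rw [Top_apply, h0 i hi, h0 (i + 1) (by omega)]
    split_ifs <;> simp

lemma good_T_pow {j : ℕ} {c : ℕ → F} (h : Good j c) (k : ℕ) :
    Good j (((Top F q) ^ k) c) := by
  induction k with
  | zero => simpa using h
  | succ k ih =>
    rw [pow_succ', Module.End.mul_apply]
    exact good_T ih

/-- the norm: product of the `σ`-orbit of the linear form `lin q c`. -/
noncomputable def nrm (q : ℕ) (c : ℕ → F) : MvPolynomial (Fin (q + 1)) F :=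
  ∏ k ∈ Finset.range q, lin q (((Top F q) ^ k) c)

lemma nrm_isHomog (c : ℕ → F) : (nrm q c).IsHomogeneous q := by
  have := IsHomogeneous.prod (Finset.range q)
    (fun k => lin q (((Top F q) ^ k) c)) (fun _ => 1) (fun k _ => lin_isHomog _)
  simpa [nrm] using this

lemma nrm_sig (hT : (Top F q) ^ q = 1) (hq : 0 < q) (c : ℕ → F) :
    sigAct18 q (nrm q c) = nrm q c := by
  rw [nrm, map_prod]
  have h1 : ∀ k ∈ Finset.range q, sigAct18 (F := F) q (lin q (((Top F q) ^ k) c))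
      = lin q (((Top F q) ^ (k + 1)) c) := by
    intro k _
    rw [sig_lin, pow_succ', Module.End.mul_apply]
  rw [Finset.prod_congr rfl h1]
  obtain ⟨q', rfl⟩ : ∃ q', q = q' + 1 := ⟨q - 1, by omega⟩
  rw [Finset.prod_range_succ, Finset.prod_range_succ', hT]
  simp

lemma nrm_alp (lam : F) {j : ℕ} (hj : j < q) {c : ℕ → F} (hg : Good j c) :
    alpAct18 q lam (nrm q c) = nrm q c := by
  rw [nrm, map_prod]
  refine Finset.prod_congr rfl fun k _ => ?_
  exact alp_lin lam ((good_T_pow hg k).2 q hj)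

lemma nrm_eval {j : ℕ} (hj : j < q) {c : ℕ → F} (hg : Good j c) {v : Fin (q + 1) → F}
    (hv : ∀ i : Fin (q + 1), (i : ℕ) < j → v i = 0) :
    eval v (nrm q c) = v (j : Fin (q + 1)) ^ q := by
  rw [nrm, map_prod]
  rw [Finset.prod_congr rfl fun k _ =>
    eval_lin (by omega) (good_T_pow hg k).1 (good_T_pow hg k).2 hv]
  rw [Finset.prod_const, Finset.card_range]

/-- indicator vector -/
def dlt (j : ℕ) : ℕ → F := fun i => if i = j then 1 else 0

lemma good_dlt (j : ℕ) : Good j (dlt (F := F) j) :=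
  ⟨if_pos rfl, fun i hi => if_neg (by omega)⟩

theorem aeval_eq_eval'' {n : Type*} (v : n → F) (f : MvPolynomial n F) :
    aeval v f = eval v f := by
  rw [aeval_def, Algebra.algebraMap_self]; rfl

theorem aeval_mul_homog {A : Type*} [CommRing A] [Algebra F A] {n : Type*}
    {f : MvPolynomial n F} {d : ℕ} (hf : f.IsHomogeneous d) (c : A) (w : n → A) :
    aeval (fun i => c * w i) f = c ^ d * aeval w f := by
  rw [aeval_def, aeval_def, eval₂_eq, eval₂_eq, Finset.mul_sum]
  refine Finset.sum_congr rfl fun a ha => ?_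
  have hd : ∑ i ∈ a.support, a i = d := by
    have h1 := hf (mem_support_iff.mp ha)
    simpa [Finsupp.weight_apply, Finsupp.sum] using h1
  rw [Finset.prod_congr rfl (fun i _ => mul_pow c (w i) (a i)), Finset.prod_mul_distrib,
    Finset.prod_pow_eq_pow_sum, hd]
  ring

/-- the point `e_{q-1}`. -/
noncomputable def vBpt (q : ℕ) : Fin (q + 1) → F := fun i => if (i : ℕ) = q - 1 then 1 else 0

theorem lowB {p r : ℕ} [Fact p.Prime] [CharP F p] (hr : 0 < r) (hq : q = p ^ r)
    {d : ℕ} (hd : 0 < d) {f : MvPolynomial (Fin (q + 1)) F} (hs : sigAct18 q f = f)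
    (hh : f.IsHomogeneous d) (hev : eval (vBpt (F := F) q) f ≠ 0) :
    q ∣ d := by
  have hp : p.Prime := Fact.out
  have hq0 : 0 < q := hq ▸ pow_pos hp.pos r
  by_contra hndvd
  set I : Ideal (Polynomial F) := Ideal.span {(Polynomial.X : Polynomial F) ^ q} with hI
  set π : Polynomial F →ₐ[F] (Polynomial F ⧸ I) := Ideal.Quotient.mkₐ F I with hπ
  set w : Fin (q + 1) → Polynomial F :=
    fun i => if (i : ℕ) < q then Polynomial.X ^ (q - 1 - (i : ℕ)) else 0 with hw
  have hXq : π (Polynomial.X ^ q) = 0 := by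
    rw [hπ, Ideal.Quotient.mkₐ_eq_mk, Ideal.Quotient.eq_zero_iff_mem, hI]
    exact Ideal.subset_span rfl
  -- Step 1: sigma acts on the point (π ∘ w) as multiplication by 1 + π X
  have key1 : ∀ i : Fin (q + 1),
      aeval (fun i => π (w i)) ((X i + if _ : 0 < (i : ℕ) ∧ (i : ℕ) < q then
        X ⟨(i : ℕ) - 1, lt_of_le_of_lt (Nat.sub_le _ _) i.isLt⟩ else 0 :
          MvPolynomial (Fin (q + 1)) F))
      = (1 + π Polynomial.X) * π (w i) := by
    intro i
    rw [map_add, aeval_X, apply_dite (aeval fun i => π (w i)), dite_eq_ite]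
    simp only [aeval_X, map_zero]
    rcases Nat.lt_or_ge (i : ℕ) q with hiq | hiq
    · rcases Nat.eq_zero_or_pos (i : ℕ) with hi0 | hi0
      · rw [if_neg (by omega)]
        have hwi : w i = Polynomial.X ^ (q - 1) := by rw [hw]; simp [hi0, hq0]
        rw [hwi, add_zero, add_mul, one_mul, ← map_mul, ← pow_succ',
          show q - 1 + 1 = q by omega, hXq, add_zero]
      · rw [if_pos ⟨hi0, hiq⟩]
        have hwi : w i = Polynomial.X ^ (q - 1 - (i : ℕ)) := by rw [hw]; simp [hiq]
        have hwi' : w ⟨(i : ℕ) - 1, lt_of_le_of_lt (Nat.sub_le _ _) i.isLt⟩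
            = Polynomial.X ^ (q - (i : ℕ)) := by
          rw [hw]
          simp only [if_pos (show (i : ℕ) - 1 < q by omega)]
          congr 1
          omega
        rw [hwi, hwi', add_mul, one_mul, ← map_mul, ← pow_succ',
          show q - 1 - (i : ℕ) + 1 = q - (i : ℕ) by omega, ← map_add]
    · have hwi : w i = 0 := by
        have hnot : ¬ (i : ℕ) < q := by omega
        rw [hw]; simp [hnot]
      rw [if_neg (by omega), hwi, map_zero, add_zero, mul_zero]
  have step1 : aeval (fun i => π (w i)) f = (1 + π Polynomial.X) ^ d * aeval (fun i => π (w i)) f := by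
    conv_lhs => rw [← hs]
    rw [show sigAct18 (F := F) q = bind₁ (fun i : Fin (q + 1) =>
      X i + if _ : 0 < (i : ℕ) ∧ (i : ℕ) < q then
        X ⟨(i : ℕ) - 1, lt_of_le_of_lt (Nat.sub_le _ _) i.isLt⟩ else 0) from rfl, aeval_bind₁]
    rw [show (fun i : Fin (q + 1) => aeval (fun i => π (w i)) ((X i +
      if _ : 0 < (i : ℕ) ∧ (i : ℕ) < q then
        X ⟨(i : ℕ) - 1, lt_of_le_of_lt (Nat.sub_le _ _) i.isLt⟩ else 0 :
          MvPolynomial (Fin (q + 1)) F))) = fun i => (1 + π Polynomial.X) * π (w i)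
      from funext key1]
    exact aeval_mul_homog hh _ _
  -- Step 2: divisibility in F[X]
  have hlift : aeval (fun i => π (w i)) f = π (aeval w f) := (comp_aeval_apply (f := w) π f).symm
  have hdvd : (Polynomial.X : Polynomial F) ^ q ∣
      (((1 + Polynomial.X) ^ d - 1) * aeval w f) := by
    rw [← Ideal.mem_span_singleton, ← hI, ← Ideal.Quotient.eq_zero_iff_mem,
      ← Ideal.Quotient.mkₐ_eq_mk F I, ← hπ, map_mul, map_sub, map_pow, map_add, map_one,
      ← hlift, sub_mul, one_mul, ← step1, sub_self]
  -- Step 3: coefficient contradiction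
  set s : ℕ := d.factorization p with hs'
  set e : ℕ := d / p ^ s with he'
  have hde : d = p ^ s * e := (Nat.ordProj_mul_ordCompl_eq_self d p).symm
  have hpe : ¬ p ∣ e := Nat.not_dvd_ordCompl hp hd.ne'
  have he0 : 0 < e := Nat.ordCompl_pos p hd.ne'
  have hsr : s < r := by
    by_contra hcon
    push_neg at hcon
    exact hndvd (hq ▸ dvd_trans (pow_dvd_pow p hcon) (Nat.ordProj_dvd d p))
  set n : ℕ := p ^ s with hn'
  have hn0 : 0 < n := pow_pos hp.pos s
  have hnq : n < q := hq ▸ Nat.pow_lt_pow_right hp.one_lt hsr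
  have hbin : ((1 : Polynomial F) + Polynomial.X) ^ d = (1 + Polynomial.X ^ n) ^ e := by
    rw [hde, pow_mul, add_pow_char_pow, one_pow]
  set R : Polynomial F :=
    ∑ k ∈ Finset.range e, Polynomial.C ((e.choose (k + 1) : F)) * Polynomial.X ^ (n * k) with hR
  have hQR : (1 + Polynomial.X ^ n) ^ e - 1 = Polynomial.X ^ n * R := by
    rw [add_comm (1 : Polynomial F), add_pow, Finset.sum_range_succ']
    simp only [pow_zero, one_mul, one_pow, Nat.choose_zero_right, Nat.cast_one]
    rw [add_sub_cancel_right, hR, Finset.mul_sum]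
    refine Finset.sum_congr rfl fun k _ => ?_
    rw [mul_one, ← pow_mul, show n * (k + 1) = n + n * k by ring, pow_add,
      Polynomial.C_eq_natCast]
    ring
  have hR0 : R.coeff 0 = (e : F) := by
    rw [hR, Polynomial.finset_sum_coeff, Finset.sum_eq_single 0]
    · simp [Nat.choose_one_right]
    · intro k _ hk
      rw [Polynomial.coeff_C_mul, Polynomial.coeff_X_pow, if_neg (by positivity), mul_zero]
    · intro h
      exact absurd (Finset.mem_range.mpr he0) h
  have hC0 : (aeval w f).coeff 0 = eval (vBpt (F := F) q) f := by
    rw [Polynomial.coeff_zero_eq_eval_zero,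
      ← congrFun (Polynomial.coe_aeval_eq_eval (0 : F)) (aeval w f), comp_aeval_apply]
    rw [show (fun i => Polynomial.aeval (0 : F) (w i)) = vBpt (F := F) q from ?_, aeval_eq_eval'']
    funext i
    rw [hw, vBpt, apply_ite (Polynomial.aeval (0 : F)), map_pow, map_zero,
      Polynomial.aeval_X, zero_pow_eq]
    rcases Nat.lt_or_ge (i : ℕ) q with hiq | hiq
    · rw [if_pos hiq]
      by_cases hieq : (i : ℕ) = q - 1
      · rw [if_pos (by omega), if_pos hieq]
      · rw [if_neg (by omega), if_neg hieq]
    · rw [if_neg (by omega), if_neg (by omega)]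
  have hcoeff : (((1 + Polynomial.X) ^ d - 1) * aeval w f).coeff n = 0 :=
    Polynomial.X_pow_dvd_iff.mp hdvd n hnq
  rw [hbin, hQR, mul_assoc] at hcoeff
  have h1 : (Polynomial.X ^ n * (R * aeval w f)).coeff (0 + n) = (R * aeval w f).coeff 0 :=
    Polynomial.coeff_X_pow_mul _ _ _
  rw [zero_add] at h1
  rw [h1, Polynomial.mul_coeff_zero, hR0, hC0] at hcoeff
  rcases mul_eq_zero.mp hcoeff with hz | hz
  · exact hpe ((CharP.cast_eq_zero_iff F p e).mp hz)
  · exact hev hz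

/-- the point `e_q`. -/
noncomputable def vApt (q : ℕ) : Fin (q + 1) → F := fun i => if (i : ℕ) = q then 1 else 0

lemma sig_Xlast : sigAct18 (F := F) q (X (Fin.last q)) = X (Fin.last q) := by
  rw [sigAct_X, if_neg (by simp [Fin.val_last]), add_zero]

lemma alp_Xlast_pow {lam : F} {m : ℕ} (hlm : lam ^ m = 1) :
    alpAct18 q lam ((X (Fin.last q)) ^ m) = (X (Fin.last q)) ^ m := by
  rw [map_pow, alpAct_X, if_neg (by simp [Fin.val_last]), mul_pow, ← C_pow, hlm, C_1, one_mul]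

lemma epsA_mem {lam : F} {m : ℕ} (hm0 : 0 < m) (hlm : lam ^ m = 1) :
    m ∈ {d : ℕ | 0 < d ∧ ∃ f : MvPolynomial (Fin (q + 1)) F, sigAct18 q f = f ∧
      alpAct18 q lam f = f ∧ f.IsHomogeneous d ∧ eval (vApt (F := F) q) f ≠ 0} := by
  refine ⟨hm0, (X (Fin.last q)) ^ m, by rw [map_pow, sig_Xlast], alp_Xlast_pow hlm,
    isHomogeneous_X_pow _ _, ?_⟩
  rw [map_pow, eval_X, vApt, if_pos (Fin.val_last q), one_pow]
  exact one_ne_zero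

lemma lowA {lam : F} {m : ℕ} (hlam : IsPrimitiveRoot lam m) {d : ℕ}
    {f : MvPolynomial (Fin (q + 1)) F} (ha : alpAct18 q lam f = f) (hh : f.IsHomogeneous d)
    (hev : eval (vApt (F := F) q) f ≠ 0) : m ∣ d := by
  have h1 : eval (vApt (F := F) q) f = lam ^ d * eval (vApt (F := F) q) f := by
    conv_lhs => rw [← ha]
    rw [show alpAct18 (F := F) q lam = bind₁ (fun i : Fin (q + 1) =>
        if (i : ℕ) < q then X i else C lam * X i) from rfl]
    rw [← aeval_eq_eval'', aeval_bind₁]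
    have h2 : (fun i : Fin (q + 1) => aeval (vApt (F := F) q)
        ((if (i : ℕ) < q then X i else C lam * X i : MvPolynomial (Fin (q + 1)) F)))
        = fun i => lam * vApt (F := F) q i := by
      funext i
      split_ifs with h
      · rw [aeval_X]
        show vApt (F := F) q i = lam * vApt (F := F) q i
        rw [vApt, if_neg (by omega), mul_zero]
      · rw [map_mul, aeval_X, aeval_C]
        simp
    rw [h2, aeval_mul_homog hh lam (vApt q), aeval_eq_eval'']
  have h3 : lam ^ d = 1 := mul_right_cancel₀ hev (by rw [one_mul, ← h1])
  exact (hlam.pow_eq_one_iff_dvd d).mp h3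

lemma epsB_mem (hq1 : 1 < q) (hT : (Top F q) ^ q = 1) (lam : F) :
    q ∈ {d : ℕ | 0 < d ∧ ∃ f : MvPolynomial (Fin (q + 1)) F, sigAct18 q f = f ∧
      alpAct18 q lam f = f ∧ f.IsHomogeneous d ∧ eval (vBpt (F := F) q) f ≠ 0} := by
  have hq0 : 0 < q := by omega
  have hj : q - 1 < q := by omega
  refine ⟨hq0, nrm q (dlt (q - 1)), nrm_sig hT hq0 _, nrm_alp lam hj (good_dlt _),
    nrm_isHomog _, ?_⟩
  rw [nrm_eval hj (good_dlt _) (fun i hi => by rw [vBpt, if_neg (by omega)])]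
  rw [vBpt, val_natCast (by omega), if_pos rfl, one_pow]
  exact one_ne_zero

lemma eps_le_max {lam : F} {m : ℕ} (hq1 : 1 < q) (hm0 : 0 < m) (hlm : lam ^ m = 1)
    (hT : (Top F q) ^ q = 1) {v : Fin (q + 1) → F} (hv : v ≠ 0) :
    sInf {d : ℕ | 0 < d ∧ ∃ f : MvPolynomial (Fin (q + 1)) F,
      sigAct18 q f = f ∧ alpAct18 q lam f = f ∧ f.IsHomogeneous d ∧ eval v f ≠ 0}
      ≤ max q m := by
  classical
  have hq0 : 0 < q := by omega
  have hex : ∃ nn : ℕ, ∃ hn : nn < q + 1, v ⟨nn, hn⟩ ≠ 0 := by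
    by_contra hcon
    push_neg at hcon
    apply hv
    funext i
    simpa [Fin.eta] using hcon i.val i.isLt
  obtain ⟨hjlt, hjne⟩ := Nat.find_spec hex
  have hmin : ∀ i : Fin (q + 1), (i : ℕ) < Nat.find hex → v i = 0 := by
    intro i hi
    have h1 := Nat.find_min hex hi
    push_neg at h1
    simpa [Fin.eta] using h1 i.isLt
  rcases Nat.lt_or_ge (Nat.find hex) q with hcase | hcase
  · refine le_trans (Nat.sInf_le ?_) (le_max_left q m)
    refine ⟨hq0, nrm q (dlt (Nat.find hex)), nrm_sig hT hq0 _,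
      nrm_alp lam hcase (good_dlt _), nrm_isHomog _, ?_⟩
    rw [nrm_eval hcase (good_dlt _) hmin]
    have h2 : ((Nat.find hex : ℕ) : Fin (q + 1)) = ⟨Nat.find hex, hjlt⟩ := by
      ext
      rw [val_natCast hjlt]
    rw [h2]
    exact pow_ne_zero _ hjne
  · refine le_trans (Nat.sInf_le ?_) (le_max_right q m)
    refine ⟨hm0, (X (Fin.last q)) ^ m, by rw [map_pow, sig_Xlast], alp_Xlast_pow hlm,
      isHomogeneous_X_pow _ _, ?_⟩
    have hjq : Nat.find hex = q := by omega
    have hlast : v (Fin.last q) ≠ 0 := by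
      have h3 : (Fin.last q) = ⟨Nat.find hex, hjlt⟩ := by
        ext
        exact hjq.symm
      rw [h3]
      exact hjne
    rw [map_pow, eval_X]
    exact pow_ne_zero _ hlast

end Aux18

/-- `ε(G̃,v)` for `G̃ = Z_{p^r m}` acting on `V = W_{p^r,1} ⊕ W_{1,λ}`. -/
noncomputable def eps18 {F : Type*} [Field F] (q : ℕ) (lam : F) (v : Fin (q + 1) → F) : ℕ :=
  sInf {d : ℕ | 0 < d ∧ ∃ f : MvPolynomial (Fin (q + 1)) F,
    sigAct18 q f = f ∧ alpAct18 q lam f = f ∧ f.IsHomogeneous d ∧ eval v f ≠ 0}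

/-- `γ(G̃, V)`. -/
noncomputable def gamma18 {F : Type*} [Field F] (q : ℕ) (lam : F) : ℕ :=
  sSup {e : ℕ | ∃ v : Fin (q + 1) → F, v ≠ 0 ∧ e = eps18 q lam v}

theorem stmt18 {F : Type*} [Field F] [IsAlgClosed F] {p : ℕ} (hp : p.Prime) [CharP F p]
    (r m : ℕ) (hr : 0 < r) (hm1 : 1 < m) (hcop : Nat.Coprime p m)
    (lam : F) (hlam : IsPrimitiveRoot lam m) :
    gamma18 (F := F) (p ^ r) lam = max (p ^ r) m ∧ max (p ^ r) m < p ^ r * m := by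
  classical
  haveI : Fact p.Prime := ⟨hp⟩
  have hq1 : 1 < p ^ r := Nat.one_lt_pow hr.ne' hp.one_lt
  have hq0 : 0 < p ^ r := by omega
  have hm0 : 0 < m := by omega
  have hT : (Aux18.Top F (p ^ r)) ^ (p ^ r) = 1 := Aux18.Top_pow_q hr rfl
  have hlm : lam ^ m = 1 := hlam.pow_eq_one
  have hepsA : eps18 (p ^ r) lam (Aux18.vApt (F := F) (p ^ r)) = m := by
    unfold eps18
    apply le_antisymm
    · exact Nat.sInf_le (Aux18.epsA_mem hm0 hlm)
    · apply le_csInf ⟨m, Aux18.epsA_mem hm0 hlm⟩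
      rintro d ⟨hd0, f, hsf, haf, hhf, hef⟩
      exact Nat.le_of_dvd hd0 (Aux18.lowA hlam haf hhf hef)
  have hepsB : eps18 (p ^ r) lam (Aux18.vBpt (F := F) (p ^ r)) = p ^ r := by
    unfold eps18
    apply le_antisymm
    · exact Nat.sInf_le (Aux18.epsB_mem hq1 hT lam)
    · apply le_csInf ⟨p ^ r, Aux18.epsB_mem hq1 hT lam⟩
      rintro d ⟨hd0, f, hsf, haf, hhf, hef⟩
      exact Nat.le_of_dvd hd0 (Aux18.lowB hr rfl hd0 hsf hhf hef)
  have hub : ∀ v : Fin (p ^ r + 1) → F, v ≠ 0 → eps18 (p ^ r) lam v ≤ max (p ^ r) m := by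
    intro v hv
    unfold eps18
    exact Aux18.eps_le_max hq1 hm0 hlm hT hv
  have hA0 : Aux18.vApt (F := F) (p ^ r) ≠ 0 := by
    intro h
    have h1 := congrFun h (Fin.last (p ^ r))
    simp [Aux18.vApt, Fin.val_last] at h1
  have hB0 : Aux18.vBpt (F := F) (p ^ r) ≠ 0 := by
    intro h
    have h1 := congrFun h ⟨p ^ r - 1, by omega⟩
    simp [Aux18.vBpt] at h1
  have hmemA : m ∈ {e : ℕ | ∃ v : Fin (p ^ r + 1) → F, v ≠ 0 ∧ e = eps18 (p ^ r) lam v} :=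
    ⟨Aux18.vApt (F := F) (p ^ r), hA0, hepsA.symm⟩
  have hmemB : p ^ r ∈ {e : ℕ | ∃ v : Fin (p ^ r + 1) → F, v ≠ 0 ∧ e = eps18 (p ^ r) lam v} :=
    ⟨Aux18.vBpt (F := F) (p ^ r), hB0, hepsB.symm⟩
  constructor
  · unfold gamma18
    apply le_antisymm
    · apply csSup_le ⟨m, hmemA⟩
      rintro e ⟨v, hv, rfl⟩
      exact hub v hv
    · have hbdd : BddAbove {e : ℕ | ∃ v : Fin (p ^ r + 1) → F,
          v ≠ 0 ∧ e = eps18 (p ^ r) lam v} := by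
        refine ⟨max (p ^ r) m, ?_⟩
        rintro e ⟨v, hv, rfl⟩
        exact hub v hv
      rcases le_total (p ^ r) m with h | h
      · rw [max_eq_right h]
        exact le_csSup hbdd hmemA
      · rw [max_eq_left h]
        exact le_csSup hbdd hmemB
  · have h1 : p ^ r < p ^ r * m := by
      calc p ^ r = p ^ r * 1 := (mul_one _).symm
      _ < p ^ r * m := mul_lt_mul_of_pos_left hm1 hq0
    have h2 : m < p ^ r * m := by
      calc m = 1 * m := (one_mul _).symm
      _ < p ^ r * m := mul_lt_mul_of_pos_right hq1 hm0
    exact max_lt h1 h2
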